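/- arXiv:1507.06187 — 3 statements merged into one kernel-verified Lean document; each statement's English description precedes it below -/
import Mathlib

section
/- If the edges of the complete graph on ℕ are coloured with finitely many colours r, then the vertex set ℕ can be partitioned into at most r pairwise disjoint sets P_0, ..., P_{r-1} such that each nonempty P_i carries a (finite or one-way infinite) path all of whose edges receive colour i. -/
open Cardinal

universe u

variable {V : Type u}

/-- Two walks between the same endpoints intersect only in the endpoints. -/
def IntDisjoint {G : SimpleGraph V} {v w : V} (p q : G.Walk v w) : Prop :=
  ∀ x, x ∈ p.support → x ∈ q.support → x = v ∨ x = w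

/-- `A` is κ-unseparable in `G`: any two distinct vertices of `A` are joined by
κ-many pairwise internally disjoint finite paths. -/
def Unseparable (G : SimpleGraph V) (A : Set V) (κ : Cardinal.{u}) : Prop :=
  ∀ v ∈ A, ∀ w ∈ A, v ≠ w →
    ∃ P : Set (G.Path v w), κ ≤ #P ∧
      ∀ p ∈ P, ∀ q ∈ P, p ≠ q → IntDisjoint (p : G.Path v w).1 (q : G.Path v w).1

/-- A path in Rado's sense inside the graph `G`: a set of vertices together with a
well-ordering such that the set of earlier neighbours of each vertex is cofinal below it. -/
structure RadoPath (G : SimpleGraph V) where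
  verts : Set V
  lt : verts → verts → Prop
  wo : IsWellOrder verts lt
  cofinal : ∀ v x : verts, lt x v → ∃ w : verts, G.Adj ↑w ↑v ∧ lt w v ∧ ¬ lt w x

/-- The order type of a Rado path. -/
noncomputable def RadoPath.otype {G : SimpleGraph V} (P : RadoPath G) : Ordinal.{u} :=
  @Ordinal.type P.verts P.lt P.wo

/-- `P` is concentrated on `A`: for every limit point `y` of `P` and every `x` below `y`,
the interval `[x, y)` contains a neighbour of `y` lying in `A`. -/
def RadoPath.ConcentratedOn {G : SimpleGraph V} (P : RadoPath G) (A : Set V) : Prop :=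
  ∀ y : P.verts, ((∃ x, P.lt x y) ∧ ∀ x, P.lt x y → ∃ z, P.lt x z ∧ P.lt z y) →
    ∀ x : P.verts, P.lt x y →
      ∃ w : P.verts, (↑w : V) ∈ A ∧ G.Adj ↑w ↑y ∧ ¬ P.lt w x ∧ P.lt w y

/-- The subgraph of `G` consisting of the edges of colour `i`. -/
def colGraph (G : SimpleGraph V) {r : ℕ} (c : Sym2 V → Fin r) (i : Fin r) :
    SimpleGraph V where
  Adj a b := G.Adj a b ∧ c s(a, b) = i
  symm := by
    constructor
    intro a b h
    refine ⟨h.1.symm, ?_⟩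
    rw [Sym2.eq_swap]
    exact h.2
  loopless := by constructor; intro a h; exact G.loopless.irrefl a h.1

/-- The restriction of `G` to the vertices in `S` (as a graph on the same vertex type). -/
def restrictTo (G : SimpleGraph V) (S : Set V) : SimpleGraph V where
  Adj a b := G.Adj a b ∧ a ∈ S ∧ b ∈ S
  symm := by constructor; intro a b h; exact ⟨h.1.symm, h.2.2, h.2.1⟩
  loopless := by constructor; intro a h; exact G.loopless.irrefl a h.1

/-- The common neighbourhood `N_G[X] = ⋂_{x ∈ X} N_G(x)`. -/
def commonNbhd (G : SimpleGraph V) (X : Set V) : Set V :=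
  {v | ∀ x ∈ X, G.Adj x v}

/-- `G` is κ-complete: it has at least κ vertices and every vertex has fewer than κ
non-neighbours. -/
def KComplete (G : SimpleGraph V) (κ : Cardinal.{u}) : Prop :=
  κ ≤ #V ∧ ∀ x : V, #{v : V | ¬ G.Adj x v} < κ

/-- `G` is of type `H_{κ,κ}` with decomposition `(A, B)`. -/
def IsHDecomp (G : SimpleGraph V) (κ : Cardinal.{u}) (A B : Set V) : Prop :=
  ∃ a b : Ordinal.{u} → V,
    Set.InjOn a (Set.Iio κ.ord) ∧ Set.InjOn b (Set.Iio κ.ord) ∧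
    a '' Set.Iio κ.ord = A ∧ b '' Set.Iio κ.ord = B ∧
    ∀ ξ ζ : Ordinal.{u}, ξ ≤ ζ → ζ < κ.ord → G.Adj (a ξ) (b ζ)

/-- `G` is of type `H_{κ,κ}` with main class `A`. -/
def IsHType (G : SimpleGraph V) (κ : Cardinal.{u}) (A : Set V) : Prop :=
  ∃ B : Set V, IsHDecomp G κ A B

/-- A finite family of increasing covers, witnessing that a set is (𝒜,κ)-centered. -/
structure CenteredWitness (V : Type u) where
  I : Type
  fin : Finite I
  lam : I → Ordinal.{u}
  fam : I → Ordinal.{u} → Set V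

/-- An 𝒜-box: the intersection `⋂_{i ∈ I} A^i_{f i}`. -/
def CenteredWitness.Box (𝒜 : CenteredWitness V) (f : 𝒜.I → Ordinal.{u}) : Set V :=
  ⋂ i, 𝒜.fam i (f i)

/-- `A` is (𝒜,κ)-centered in `G`. -/
def IsCentered (G : SimpleGraph V) (A : Set V) (𝒜 : CenteredWitness V)
    (κ : Cardinal.{u}) : Prop :=
  (∀ i, ∀ α β : Ordinal.{u}, α ≤ β → β < 𝒜.lam i → 𝒜.fam i α ⊆ 𝒜.fam i β) ∧
  (∀ i, A ⊆ ⋃ α ∈ Set.Iio (𝒜.lam i), 𝒜.fam i α) ∧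
  (∀ f : 𝒜.I → Ordinal.{u}, (∀ i, f i < 𝒜.lam i) → κ ≤ #(commonNbhd G (𝒜.Box f)))

/-- The set `S` carries a (finite or ω-type) path all of whose edges have colour `i`. -/
def CarriesPath {r : ℕ} (c : Sym2 ℕ → Fin r) (i : Fin r) (S : Set ℕ) : Prop :=
  (∃ l : List ℕ, l.Nodup ∧ (↑l.toFinset : Set ℕ) = S ∧
      l.Chain' (fun a b => c s(a, b) = i)) ∨
  (∃ f : ℕ → ℕ, Function.Injective f ∧ Set.range f = S ∧
      ∀ n : ℕ, c s(f n, f (n + 1)) = i)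

namespace RadoAux
open Filter

variable {r : ℕ}

def colSet (c : Sym2 ℕ → Fin r) (v : ℕ) (i : Fin r) : Set ℕ := {w | c s(v, w) = i}

lemma exists_ucol (c : Sym2 ℕ → Fin r) (v : ℕ) :
    ∃ i, colSet c v i ∈ hyperfilter ℕ := by
  by_contra h
  push_neg at h
  have h2 : ∀ i, (colSet c v i)ᶜ ∈ hyperfilter ℕ := fun i =>
    (Ultrafilter.compl_mem_iff_notMem).2 (h i)
  have h3 : (⋂ i, (colSet c v i)ᶜ) ∈ hyperfilter ℕ := Filter.iInter_mem.2 h2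
  have h4 : (⋂ i, (colSet c v i)ᶜ) = ∅ := by
    ext w
    simp only [Set.mem_iInter, Set.mem_compl_iff, Set.mem_empty_iff_false, iff_false, not_forall,
      not_not]
    exact ⟨c s(v, w), rfl⟩
  rw [h4] at h3
  exact Filter.empty_notMem (↑(hyperfilter ℕ) : Filter ℕ) h3

noncomputable def UCol (c : Sym2 ℕ → Fin r) (v : ℕ) : Fin r := (exists_ucol c v).choose

lemma ucol_mem (c : Sym2 ℕ → Fin r) (v : ℕ) : colSet c v (UCol c v) ∈ hyperfilter ℕ :=
  (exists_ucol c v).choose_spec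

/-- The candidate set for extension. -/
def ext (c : Sym2 ℕ → Fin r) (n : ℕ) (σ : Fin r → List ℕ) (a : ℕ) (i : Fin r) : Set ℕ :=
  {w : ℕ | c s(a, w) = i ∧ c s(n, w) = i ∧ (∀ j, w ∉ σ j) ∧ w ≠ n}

open Classical in
noncomputable def step (c : Sym2 ℕ → Fin r) (n : ℕ) (σ : Fin r → List ℕ) : Fin r → List ℕ :=
  if _h0 : ∃ i, n ∈ σ i then σ
  else if _he : σ (UCol c n) = [] then Function.update σ (UCol c n) [n]
  else if hT : (ext c n σ ((σ (UCol c n)).headI) (UCol c n)).Nonempty then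
    Function.update σ (UCol c n) (n :: hT.choose :: σ (UCol c n))
  else σ

noncomputable def seq (c : Sym2 ℕ → Fin r) : ℕ → Fin r → List ℕ
  | 0 => fun _ => []
  | n+1 => step c n (seq c n)

structure Good (c : Sym2 ℕ → Fin r) (n : ℕ) (σ : Fin r → List ℕ) : Prop where
  nodup : ∀ i, (σ i).Nodup
  cross : ∀ i j x, x ∈ σ i → x ∈ σ j → i = j
  chain : ∀ i, (σ i).Chain' (fun a b => c s(a, b) = i)
  headc : ∀ i x, (σ i).head? = some x → UCol c x = i
  cover : ∀ m, m < n → ∃ i, m ∈ σ i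

lemma ext_nonempty' (c : Sym2 ℕ → Fin r) (n : ℕ) (σ : Fin r → List ℕ)
    (hg : Good c n σ) {a : ℕ} (ha : (σ (UCol c n)).head? = some a) :
    (ext c n σ a (UCol c n)).Nonempty := by
  set i := UCol c n with hi
  have hA : colSet c a i ∈ hyperfilter ℕ := by
    have := hg.headc i a ha
    rw [← this]
    exact ucol_mem c a
  have hB : colSet c n i ∈ hyperfilter ℕ := ucol_mem c n
  have hAB : colSet c a i ∩ colSet c n i ∈ hyperfilter ℕ := Filter.inter_mem hA hB
  have hinf : (colSet c a i ∩ colSet c n i).Infinite := by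
    intro hfin
    exact Filter.notMem_hyperfilter_of_finite hfin hAB
  have hused : ({w : ℕ | ∃ j, w ∈ σ j} ∪ {n}).Finite := by
    apply Set.Finite.union _ (Set.finite_singleton n)
    have : {w : ℕ | ∃ j, w ∈ σ j} = ⋃ j, {w | w ∈ σ j} := by
      ext w; simp
    rw [this]
    exact Set.finite_iUnion (fun j => (σ j).finite_toSet)
  have h5 := (hinf.diff hused).nonempty
  obtain ⟨w, hw⟩ := h5
  refine ⟨w, hw.1.1, hw.1.2, ?_, ?_⟩
  · intro j hj
    exact hw.2 (Or.inl ⟨j, hj⟩)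
  · intro hwn
    exact hw.2 (Or.inr hwn)



lemma step_suffix (c : Sym2 ℕ → Fin r) (n : ℕ) (σ : Fin r → List ℕ) (j : Fin r) :
    σ j <:+ step c n σ j := by
  unfold step
  split_ifs with h0 he hT
  · exact List.suffix_refl _
  · rcases eq_or_ne j (UCol c n) with h | h
    · subst h; rw [Function.update_self, he]; exact List.nil_suffix
    · rw [Function.update_of_ne h]
  · rcases eq_or_ne j (UCol c n) with h | h
    · subst h; rw [Function.update_self]
      exact (List.suffix_cons _ _).trans (List.suffix_cons _ _)
    · rw [Function.update_of_ne h]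
  · exact List.suffix_refl _

lemma good_step (c : Sym2 ℕ → Fin r) (n : ℕ) (σ : Fin r → List ℕ) (hg : Good c n σ) :
    Good c (n+1) (step c n σ) := by
  have hcov : ∀ m, m < n + 1 → (∃ i, m ∈ step c n σ i) → True := fun _ _ _ => trivial
  have hsub : ∀ j, ∀ x ∈ σ j, x ∈ step c n σ j := fun j x hx =>
    (step_suffix c n σ j).subset hx
  unfold step
  split_ifs with h0 he hT
  · exact ⟨hg.nodup, hg.cross, hg.chain, hg.headc, fun m hm => by
      rcases Nat.lt_succ_iff_lt_or_eq.1 hm with h | h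
      · exact hg.cover m h
      · exact h ▸ h0⟩
  · push_neg at h0
    constructor
    · intro j
      rcases eq_or_ne j (UCol c n) with h | h
      · subst h; rw [Function.update_self]; exact List.nodup_singleton n
      · rw [Function.update_of_ne h]; exact hg.nodup j
    · intro j k x hj hk
      rcases eq_or_ne j (UCol c n) with h | h <;> rcases eq_or_ne k (UCol c n) with h' | h'
      · rw [h, h']
      · subst h; rw [Function.update_self] at hj
        rw [Function.update_of_ne h'] at hk
        simp only [List.mem_singleton] at hj
        exact absurd (hj ▸ hk) (h0 k)
      · subst h'; rw [Function.update_self] at hk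
        rw [Function.update_of_ne h] at hj
        simp only [List.mem_singleton] at hk
        exact absurd (hk ▸ hj) (h0 j)
      · rw [Function.update_of_ne h] at hj; rw [Function.update_of_ne h'] at hk
        exact hg.cross j k x hj hk
    · intro j
      rcases eq_or_ne j (UCol c n) with h | h
      · subst h; rw [Function.update_self]; exact List.isChain_singleton n
      · rw [Function.update_of_ne h]; exact hg.chain j
    · intro j x hx
      rcases eq_or_ne j (UCol c n) with h | h
      · subst h; rw [Function.update_self] at hx
        simp only [List.head?_cons, Option.some.injEq] at hx
        rw [← hx]
      · rw [Function.update_of_ne h] at hx; exact hg.headc j x hx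
    · intro m hm
      rcases Nat.lt_succ_iff_lt_or_eq.1 hm with h | h
      · obtain ⟨i, hi⟩ := hg.cover m h
        rcases eq_or_ne i (UCol c n) with h2 | h2
        · subst h2; rw [he] at hi; exact absurd hi List.not_mem_nil
        · exact ⟨i, by rw [Function.update_of_ne h2]; exact hi⟩
      · exact ⟨UCol c n, by rw [Function.update_self]; exact h ▸ List.mem_singleton_self n⟩
  · -- main extension case
    push_neg at h0
    obtain ⟨a, t, hat⟩ := List.exists_cons_of_ne_nil he
    set i := UCol c n with hidef
    set w := hT.choose with hwdef
    have hw := hT.choose_spec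
    have hhead : (σ i).headI = a := by rw [hat]; rfl
    have hw' : c s((σ i).headI, w) = i ∧ c s(n, w) = i ∧ (∀ j, w ∉ σ j) ∧ w ≠ n := hw
    obtain ⟨hw1', hw2, hw3, hw4⟩ := hw'
    have hw1 : c s(a, w) = i := hhead ▸ hw1'
    constructor
    · intro j
      rcases eq_or_ne j i with h | h
      · subst h; rw [Function.update_self]
        refine List.nodup_cons.2 ⟨?_, List.nodup_cons.2 ⟨hw3 i, hg.nodup i⟩⟩
        simp only [List.mem_cons]
        rintro (h | h)
        · exact hw4 h.symm
        · exact h0 i h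
      · rw [Function.update_of_ne h]; exact hg.nodup j
    · intro j k x hj hk
      rcases eq_or_ne j i with h | h <;> rcases eq_or_ne k i with h' | h'
      · rw [h, h']
      · subst h; rw [Function.update_self] at hj
        rw [Function.update_of_ne h'] at hk
        simp only [List.mem_cons] at hj
        rcases hj with h | h | h
        · exact absurd (h ▸ hk) (h0 k)
        · exact absurd (h ▸ hk) (hw3 k)
        · exact hg.cross i k x h hk
      · subst h'; rw [Function.update_self] at hk
        rw [Function.update_of_ne h] at hj
        simp only [List.mem_cons] at hk
        rcases hk with h' | h' | h'
        · exact absurd (h' ▸ hj) (h0 j)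
        · exact absurd (h' ▸ hj) (hw3 j)
        · exact hg.cross j i x hj h'
      · rw [Function.update_of_ne h] at hj; rw [Function.update_of_ne h'] at hk
        exact hg.cross j k x hj hk
    · intro j
      rcases eq_or_ne j i with h | h
      · subst h; rw [Function.update_self, hat]
        refine List.isChain_cons_cons.2 ⟨hw2, List.isChain_cons_cons.2 ⟨?_, ?_⟩⟩
        · rw [Sym2.eq_swap]; exact hw1
        · have := hg.chain i; rw [hat] at this; exact this
      · rw [Function.update_of_ne h]; exact hg.chain j
    · intro j x hx
      rcases eq_or_ne j i with h | h
      · subst h; rw [Function.update_self] at hx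
        simp only [List.head?_cons, Option.some.injEq] at hx
        rw [← hx]
      · rw [Function.update_of_ne h] at hx; exact hg.headc j x hx
    · intro m hm
      rcases Nat.lt_succ_iff_lt_or_eq.1 hm with h | h
      · obtain ⟨j, hj⟩ := hg.cover m h
        rcases eq_or_ne j i with h2 | h2
        · subst h2
          exact ⟨i, by
            rw [Function.update_self]
            exact List.mem_cons_of_mem _ (List.mem_cons_of_mem _ hj)⟩
        · exact ⟨j, by rw [Function.update_of_ne h2]; exact hj⟩
      · exact ⟨i, by rw [Function.update_self]; exact h ▸ List.mem_cons_self⟩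
  · -- contradiction: ext is nonempty
    obtain ⟨a, t, hat⟩ := List.exists_cons_of_ne_nil he
    have ha : (σ (UCol c n)).head? = some a := by rw [hat]; rfl
    have := ext_nonempty' c n σ hg ha
    rw [hat] at hT
    simp only [List.headI_cons] at hT
    exact absurd this hT

lemma good_seq (c : Sym2 ℕ → Fin r) : ∀ n, Good c n (seq c n)
  | 0 => ⟨fun _ => List.nodup_nil, fun i j x hi => absurd hi List.not_mem_nil,
      fun _ => List.isChain_nil, fun i x hx => by simp [seq] at hx,
      fun m hm => absurd hm (Nat.not_lt_zero m)⟩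
  | n+1 => good_step c n (seq c n) (good_seq c n)

lemma seq_suffix (c : Sym2 ℕ → Fin r) (i : Fin r) {m n : ℕ} (h : m ≤ n) :
    seq c m i <:+ seq c n i := by
  induction n, h using Nat.le_induction with
  | base => exact List.suffix_refl _
  | succ n hmn ih => exact ih.trans (step_suffix c n (seq c n) i)

def Pset (c : Sym2 ℕ → Fin r) (i : Fin r) : Set ℕ := {x | ∃ n, x ∈ seq c n i}

lemma pset_disjoint (c : Sym2 ℕ → Fin r) {i j : Fin r} (hij : i ≠ j) :
    Disjoint (Pset c i) (Pset c j) := by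
  rw [Set.disjoint_left]
  rintro x ⟨n, hn⟩ ⟨m, hm⟩
  rcases le_total n m with h | h
  · exact hij ((good_seq c m).cross i j x ((seq_suffix c i h).subset hn) hm)
  · exact hij ((good_seq c n).cross i j x hn ((seq_suffix c j h).subset hm))

lemma pset_cover (c : Sym2 ℕ → Fin r) (x : ℕ) : ∃ i, x ∈ Pset c i := by
  obtain ⟨i, hi⟩ := (good_seq c (x+1)).cover x (Nat.lt_succ_self x)
  exact ⟨i, x+1, hi⟩

lemma stage_eq (c : Sym2 ℕ → Fin r) (i : Fin r) {m m' : ℕ} (h : m ≤ m') {k : ℕ}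
    (hk : k < (seq c m i).length) :
    (seq c m' i).reverse.getD k 0 = (seq c m i).reverse.getD k 0 := by
  obtain ⟨u, hu⟩ := seq_suffix c i h
  rw [← hu, List.reverse_append]
  exact List.getD_append _ _ _ k (by simpa using hk)

lemma carries (c : Sym2 ℕ → Fin r) (i : Fin r) :
    (∃ l : List ℕ, l.Nodup ∧ (↑l.toFinset : Set ℕ) = Pset c i ∧
      l.Chain' (fun a b => c s(a, b) = i)) ∨
    (∃ f : ℕ → ℕ, Function.Injective f ∧ Set.range f = Pset c i ∧
      ∀ n : ℕ, c s(f n, f (n + 1)) = i) := by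
  classical
  have hRsymm : ∀ a b : ℕ, c s(a, b) = i → c s(b, a) = i := fun a b h => by
    rwa [Sym2.eq_swap]
  have hchainrev : ∀ m, (seq c m i).reverse.Chain' (fun a b => c s(a, b) = i) := fun m =>
    List.isChain_reverse.2 (((good_seq c m).chain i).imp (fun a b h => hRsymm a b h))
  by_cases hb : ∃ N, ∀ m, (seq c m i).length ≤ N
  · left
    obtain ⟨N, hN⟩ := hb
    have hne : (Set.range fun m => (seq c m i).length).Nonempty := ⟨_, ⟨0, rfl⟩⟩
    have hbdd : BddAbove (Set.range fun m => (seq c m i).length) :=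
      ⟨N, by rintro _ ⟨m, rfl⟩; exact hN m⟩
    obtain ⟨m₀, hm₀⟩ := Nat.sSup_mem hne hbdd
    have hmax : ∀ m, (seq c m i).length ≤ (seq c m₀ i).length := by
      intro m
      have := le_csSup hbdd (Set.mem_range_self (f := fun m => (seq c m i).length) m)
      simpa [hm₀] using this
    have hall : ∀ m, seq c m i <:+ seq c m₀ i := by
      intro m
      rcases le_total m m₀ with h | h
      · exact seq_suffix c i h
      · have h2 := seq_suffix c i h
        rw [← h2.eq_of_length (le_antisymm h2.length_le (hmax m))]
    refine ⟨(seq c m₀ i).reverse, List.nodup_reverse.2 ((good_seq c m₀).nodup i), ?_,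
      hchainrev m₀⟩
    ext x
    simp only [Finset.coe_sort_coe, Finset.mem_coe, List.mem_toFinset, List.mem_reverse]
    constructor
    · intro hx; exact ⟨m₀, hx⟩
    · rintro ⟨n, hn⟩; exact (hall n).subset hn
  · right
    push_neg at hb
    choose g hg using hb
    set f : ℕ → ℕ := fun k => (seq c (g k) i).reverse.getD k 0 with hf
    have hstab : ∀ k m, k < (seq c m i).length → (seq c m i).reverse.getD k 0 = f k := by
      intro k m hk
      rcases le_total m (g k) with h | h
      · exact (stage_eq c i h hk).symm
      · exact stage_eq c i h (hg k)
    have hfel : ∀ k m (hk : k < (seq c m i).length),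
        (seq c m i).reverse[k]'(by simpa using hk) = f k := by
      intro k m hk
      rw [← List.getD_eq_getElem _ 0 (by simpa using hk)]
      exact hstab k m hk
    refine ⟨f, ?_, ?_, ?_⟩
    · intro k k' hkk
      set m := g (max k k') with hm
      have h1 : k < (seq c m i).length := lt_of_le_of_lt (le_max_left k k') (hg _)
      have h2 : k' < (seq c m i).length := lt_of_le_of_lt (le_max_right k k') (hg _)
      have hnd : (seq c m i).reverse.Nodup := List.nodup_reverse.2 ((good_seq c m).nodup i)
      have hget : (seq c m i).reverse.get ⟨k, by simpa using h1⟩ =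
          (seq c m i).reverse.get ⟨k', by simpa using h2⟩ := by
        rw [List.get_eq_getElem, List.get_eq_getElem, hfel k m h1, hfel k' m h2]
        exact hkk
      have := (hnd.get_inj_iff).1 hget
      simpa using congrArg Fin.val this
    · ext x
      constructor
      · rintro ⟨k, rfl⟩
        have hk := hg k
        have : f k ∈ (seq c (g k) i).reverse := by
          rw [← hfel k (g k) hk]
          exact List.getElem_mem _
        exact ⟨g k, List.mem_reverse.1 this⟩
      · rintro ⟨n, hn⟩
        have hx : x ∈ (seq c n i).reverse := List.mem_reverse.2 hn
        obtain ⟨k, hk, hkx⟩ := List.mem_iff_getElem.1 hx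
        have hk' : k < (seq c n i).length := by simpa using hk
        exact ⟨k, by rw [← hfel k n hk']; exact hkx⟩
    · intro k
      have hk1 : k + 1 < (seq c (g (k+1)) i).length := hg (k+1)
      have hk0 : k < (seq c (g (k+1)) i).length := Nat.lt_of_succ_lt hk1
      have hch := hchainrev (g (k+1))
      rw [List.Chain', List.isChain_iff_getElem] at hch
      have hlen : k < (seq c (g (k+1)) i).reverse.length - 1 := by
        simp only [List.length_reverse]; omega
      have := hch k (by omega)
      rw [hfel k _ hk0, hfel (k+1) _ hk1] at this
      exact this

end RadoAux

/-- Rado's theorem: for any finite edge colouring of the complete graph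
on ℕ, the vertices can be partitioned into monochromatic paths of different colours. -/



theorem stmt2 (r : ℕ) (hr : 0 < r) (c : Sym2 ℕ → Fin r) :
    ∃ P : Fin r → Set ℕ, Pairwise (Function.onFun Disjoint P) ∧
      (⋃ i, P i) = Set.univ ∧ ∀ i, CarriesPath c i (P i) := by
  refine ⟨RadoAux.Pset c, ?_, ?_, ?_⟩
  · intro i j hij
    exact RadoAux.pset_disjoint c hij
  · ext x
    simp only [Set.mem_iUnion, Set.mem_univ, iff_true]
    exact RadoAux.pset_cover c x
  · intro i
    exact RadoAux.carries c i
end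

section
/- There exists a graph G on vertex set ω₁ such that for every finite set F of vertices the common neighborhood ⋂_{v∈F} N_G(v) is uncountable, yet G contains no path of order type ω₁ in the sense of Rado (equivalently, no subgraph P with a well-ordering ≺ of type ω₁ of its vertices such that for every vertex v, the set of earlier neighbors of v is ≺-cofinal below v). -/
open Cardinal

universe u

variable {V : Type u}

namespace Stmt4Aux

noncomputable section

abbrev W : Type := (Cardinal.aleph 1).ord.ToType

lemma mkW : #W = Cardinal.aleph 1 := Cardinal.mk_ord_toType _

instance : Infinite W := by
  rw [Cardinal.infinite_iff, mkW]
  exact Cardinal.aleph0_le_aleph 1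

lemma countable_Iic (x : W) : (Set.Iic x).Countable := by
  have h : #(Set.Iio x) < Cardinal.aleph 1 := Cardinal.mk_Iio_ord_toType x
  have hIio : (Set.Iio x).Countable := (Cardinal.countable_iff_lt_aleph_one _).2 h
  have : Set.Iic x = Set.Iio x ∪ {x} := by
    ext y; simp [le_iff_lt_or_eq]
  rw [this]
  exact hIio.union (Set.countable_singleton x)

instance : IsWellOrder W (· < ·) := isWellOrder_lt

lemma exists_bound {s : Set W} (hs : s.Countable) : ∃ b : W, ∀ x ∈ s, x < b := by
  have h1 : #s < Ordinal.cof (Ordinal.type ((· < ·) : W → W → Prop)) := by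
    rw [Ordinal.type_toType, Cardinal.isRegular_aleph_one.cof_ord]
    exact (Cardinal.countable_iff_lt_aleph_one _).1 hs
  by_contra hne
  push_neg at hne
  have hc := Order.cof_le (α := W) (s := s) hne
  rw [Ordinal.cof_toType, Cardinal.isRegular_aleph_one.cof_ord] at hc
  rw [Ordinal.type_toType, Cardinal.isRegular_aleph_one.cof_ord] at h1
  exact absurd hc (not_le.2 h1)

lemma mk_prod : #(Finset W × W) = #W := by
  rw [Cardinal.mk_prod, Cardinal.mk_finset_of_infinite]
  simp only [Cardinal.lift_id]
  rw [Cardinal.mul_eq_self]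
  rw [mkW]; exact Cardinal.aleph0_le_aleph 1

def e : W ≃ (Finset W × W) := (Cardinal.eq.1 mk_prod.symm).some

def g (v : W) : Finset W := (e v).1

def G : SimpleGraph W where
  Adj a b := (a ∈ g b ∧ a < b) ∨ (b ∈ g a ∧ b < a)
  symm := by constructor; intro a b h; tauto
  loopless := by constructor; intro a h; rcases h with ⟨_, h⟩ | ⟨_, h⟩ <;> exact lt_irrefl a h

lemma fiber_uncountable (F : Finset W) : ¬ ({v : W | g v = F}).Countable := by
  intro hc
  have hinj : Function.Injective (fun w : W => (⟨e.symm (F, w), by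
      simp [g]⟩ : {v : W | g v = F})) := by
    intro a b hab
    have : e.symm (F, a) = e.symm (F, b) := congrArg Subtype.val hab
    have := e.symm.injective this
    exact congrArg Prod.snd this
  have h1 : #W ≤ #({v : W | g v = F}) := Cardinal.mk_le_of_injective hinj
  rw [mkW] at h1
  have h2 : #({v : W | g v = F}) ≤ Cardinal.aleph0 := hc.le_aleph0
  exact absurd (h1.trans h2) (not_le.2 Cardinal.aleph0_lt_aleph_one)

lemma common_uncountable (F : Finset W) : ¬ (commonNbhd G (↑F : Set W)).Countable := by
  intro hc
  have hU : (⋃ x ∈ F, Set.Iic x).Countable :=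
    Set.Countable.biUnion F.countable_toSet (fun x _ => countable_Iic x)
  have hsub : {v : W | g v = F} ⊆ (⋃ x ∈ F, Set.Iic x) ∪ commonNbhd G (↑F : Set W) := by
    intro v hv
    by_cases hb : ∃ x ∈ F, v ≤ x
    · obtain ⟨x, hx, hvx⟩ := hb
      exact Or.inl (Set.mem_biUnion hx hvx)
    · push_neg at hb
      refine Or.inr (fun x hx => Or.inl ⟨?_, hb x hx⟩)
      rw [hv]; exact hx
  exact fiber_uncountable F ((hU.union hc).mono hsub)

lemma no_rado (P : RadoPath G) : P.otype ≠ (Cardinal.aleph 1).ord := by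
  intro hP
  classical
  haveI := P.wo
  have htype : Ordinal.type P.lt = Ordinal.type ((· < ·) : W → W → Prop) := by
    rw [Ordinal.type_toType]; exact hP
  obtain ⟨f⟩ := Ordinal.type_eq.1 htype
  set h : W → W := fun x => ((f.symm x : P.verts) : W) with hh
  set k : W → W := fun x => if hx : x ∈ P.verts then f ⟨x, hx⟩ else x with hk
  have step : ∀ a : W, ∃ b : W, a < b ∧ ∀ x : W, x ≤ a → h x < b ∧ k x < b := by
    intro a
    obtain ⟨b, hb⟩ := exists_bound (s := insert a (h '' Set.Iic a ∪ k '' Set.Iic a))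
      ((((countable_Iic a).image h).union ((countable_Iic a).image k)).insert a)
    exact ⟨b, hb a (Set.mem_insert _ _), fun x hx =>
      ⟨hb _ (Set.mem_insert_of_mem _ (Or.inl ⟨x, hx, rfl⟩)),
       hb _ (Set.mem_insert_of_mem _ (Or.inr ⟨x, hx, rfl⟩))⟩⟩
  choose nxt hlt hcl using step
  obtain ⟨w0⟩ : Nonempty W := inferInstance
  set d : ℕ → W := fun n => nxt^[n] w0 with hd0
  have hd : ∀ n, d n < d (n + 1) := by
    intro n
    have : d (n + 1) = nxt (d n) := by
      simp [hd0, Function.iterate_succ_apply']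
    rw [this]; exact hlt (d n)
  have hdcl : ∀ n, ∀ x : W, x ≤ d n → h x < d (n + 1) ∧ k x < d (n + 1) := by
    intro n x hx
    have : d (n + 1) = nxt (d n) := by
      simp [hd0, Function.iterate_succ_apply']
    rw [this]; exact hcl (d n) x hx
  have hUne : {y : W | ∀ n, d n ≤ y}.Nonempty := by
    obtain ⟨b, hb⟩ := exists_bound (Set.countable_range d)
    exact ⟨b, fun n => (hb _ (Set.mem_range_self n)).le⟩
  have wf : WellFounded ((· < ·) : W → W → Prop) := (isWellOrder_lt (α := W)).wf
  set δ : W := wf.min {y : W | ∀ n, d n ≤ y} hUne with hδ0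
  have hδU : ∀ n, d n ≤ δ := wf.min_mem {y : W | ∀ n, d n ≤ y} hUne
  have hdδ : ∀ n, d n < δ := fun n => lt_of_lt_of_le (hd n) (hδU (n + 1))
  have hbelow : ∀ x : W, x < δ → ∃ n, x < d n := by
    intro x hx
    by_contra hcon
    push_neg at hcon
    exact wf.not_lt_min {y : W | ∀ n, d n ≤ y} (x := x) (fun n => hcon n) hx
  have hclδ : ∀ x : W, x < δ → h x < δ ∧ k x < δ := by
    intro x hx
    obtain ⟨n, hn⟩ := hbelow x hx
    obtain ⟨h1, h2⟩ := hdcl n x hn.le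
    exact ⟨lt_of_lt_of_le h1 (hδU (n + 1)), lt_of_lt_of_le h2 (hδU (n + 1))⟩
  set w : P.verts := f.symm δ with hwdef
  have hfw : f w = δ := f.apply_symm_apply δ
  have claimA : ∀ u : P.verts, P.lt u w → (u : W) < δ := by
    intro u hu
    have hfu : f u < δ := by rw [← hfw]; exact f.map_rel_iff.2 hu
    have h2 : ((f.symm (f u) : P.verts) : W) < δ := (hclδ (f u) hfu).1
    rwa [f.symm_apply_apply] at h2
  have claimFA : ∀ u : P.verts, P.lt u w → f u < δ := by
    intro u hu
    rw [← hfw]; exact f.map_rel_iff.2 hu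
  have claimB : ∀ u : P.verts, (u : W) < δ → P.lt u w := by
    intro u hu
    have := (hclδ (↑u) hu).2
    rw [hk] at this
    simp only [Subtype.coe_prop, dif_pos, Subtype.coe_eta] at this
    rw [← hfw] at this
    exact f.map_rel_iff.1 this
  have hδw : δ ≤ (w : W) := by
    by_contra hcon
    push_neg at hcon
    exact irrefl_of P.lt w (claimB w hcon)
  set S : Set P.verts := {u | G.Adj ↑u ↑w ∧ P.lt u w} with hS
  have hmemg : ∀ u ∈ S, (u : W) ∈ g ↑w := by
    intro u hu
    rcases hu.1 with ⟨h1, _⟩ | ⟨_, h2⟩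
    · exact h1
    · exact absurd h2 (asymm (lt_of_lt_of_le (claimA u hu.2) hδw))
  have hSfin : S.Finite := by
    have hinj : Function.Injective
        (fun u : S => (⟨((u : P.verts) : W), hmemg u u.2⟩ : {x // x ∈ g (↑w : W)})) := by
      intro a b hab
      simp only [Subtype.mk.injEq] at hab
      apply Subtype.ext; apply Subtype.ext
      exact hab
    haveI : Finite S := Finite.of_injective _ hinj
    exact S.toFinite
  set T : Set W := (fun u : P.verts => (f u : W)) '' S with hT
  have hTfin : T.Finite := hSfin.image _
  have hTlt : ∀ t ∈ T, t < δ := by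
    rintro t ⟨u, hu, rfl⟩
    exact claimFA u hu.2
  have hcof : ∀ n, ∃ t ∈ T, d n ≤ t := by
    intro n
    set x : P.verts := f.symm (d n) with hx0
    have hxw : P.lt x w := by
      apply f.map_rel_iff.1
      rw [hfw, hx0, f.apply_symm_apply]
      exact hdδ n
    obtain ⟨u, hadj, huw, hnx⟩ := P.cofinal w x hxw
    refine ⟨f u, ⟨u, ⟨hadj, huw⟩, rfl⟩, ?_⟩
    by_contra hle
    push_neg at hle
    apply hnx
    apply f.map_rel_iff.1
    rw [hx0, f.apply_symm_apply]
    exact hle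
  obtain ⟨t0, ht0, _⟩ := hcof 0
  obtain ⟨a, haT, hmax⟩ := hTfin.exists_maximal ⟨t0, ht0⟩
  obtain ⟨n, hn⟩ := hbelow a (hTlt a haT)
  obtain ⟨t, htT, hdt⟩ := hcof n
  have hat : a < t := lt_of_lt_of_le hn hdt
  exact absurd (hmax htT hat.le) (not_le.2 hat)

end
end Stmt4Aux


/-- A graph of size ω₁ with all finite common neighbourhoods uncountable
but no path of order type ω₁. -/
theorem stmt4 : ∃ (V : Type) (G : SimpleGraph V), #V = Cardinal.aleph 1 ∧
    (∀ F : Finset V, ¬ (commonNbhd G ↑F).Countable) ∧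
    ¬ ∃ P : RadoPath G, P.otype = (Cardinal.aleph 1).ord := by
  refine ⟨Stmt4Aux.W, Stmt4Aux.G, Stmt4Aux.mkW, Stmt4Aux.common_uncountable, ?_⟩
  rintro ⟨P, hP⟩
  exact Stmt4Aux.no_rado P hP
end

section
/- Let G = (V,E) be a graph, κ a cardinal, and A ⊆ V a set of size κ which is the increasing union of sets A_α (α < cf(κ)) with |A_α| < κ and |⋂_{v ∈ A_α} N_G(v)| = κ for all α < cf(κ). Then there is a subgraph H of G of type H_{κ,κ} with main class A; that is, there are enumerations A = {a_ξ : ξ < κ} and an injective sequence {b_ξ : ξ < κ} of vertices of G with b_ζ adjacent in G to a_ξ for all ξ ≤ ζ < κ. -/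
open Cardinal

universe u

variable {V : Type u}

/-- Auxiliary: transfinite choice function avoiding previous values. -/
noncomputable def pickFun [Nonempty V] (S : Ordinal.{u} → Set V) : Ordinal.{u} → V :=
  Ordinal.lt_wf.fix fun ζ ih =>
    Classical.epsilon fun v => v ∈ S ζ ∧ ∀ ξ (h : ξ < ζ), v ≠ ih ξ h

theorem pickFun_spec [Nonempty V] (S : Ordinal.{u} → Set V) (ζ : Ordinal.{u})
    (h : ∃ v, v ∈ S ζ ∧ ∀ ξ, ξ < ζ → v ≠ pickFun S ξ) :
    pickFun S ζ ∈ S ζ ∧ ∀ ξ, ξ < ζ → pickFun S ζ ≠ pickFun S ξ := by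
  have heq : pickFun S ζ =
      Classical.epsilon fun v => v ∈ S ζ ∧ ∀ ξ, ξ < ζ → v ≠ pickFun S ξ :=
    Ordinal.lt_wf.fix_eq _ ζ
  rw [heq]
  exact Classical.epsilon_spec h

/-- Building a subgraph of type H_{κ,κ} with main class `A` from an
increasing cover of `A` by small sets with large common neighbourhoods. -/
theorem stmt10 {V : Type u} (G : SimpleGraph V) (κ : Cardinal.{u}) (hκ : ℵ₀ ≤ κ)
    (A : Set V) (hA : #A = κ)
    (Af : Ordinal.{u} → Set V)
    (hmono : ∀ α β : Ordinal.{u}, α ≤ β → β < κ.ord.cof.ord → Af α ⊆ Af β)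
    (hsize : ∀ α < κ.ord.cof.ord, #(Af α) < κ)
    (hunion : A = ⋃ α ∈ Set.Iio κ.ord.cof.ord, Af α)
    (hnb : ∀ α < κ.ord.cof.ord, #(commonNbhd G (Af α)) = κ) :
    IsHType G κ A := by
  classical
  set lam : Ordinal.{u} := κ.ord.cof.ord with hlam
  -- basic nonemptiness
  have hκ0 : κ ≠ 0 := by
    intro h; rw [h] at hκ; exact (Cardinal.aleph0_ne_zero) (le_antisymm (le_of_le_of_eq hκ rfl) (Cardinal.zero_le _) |>.symm ▸ rfl)
  have hAne : Nonempty A := by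
    rw [← Cardinal.mk_ne_zero_iff]; rw [hA]; exact hκ0
  haveI : Nonempty V := ⟨(Classical.choice hAne : A).1⟩
  -- each Af α (α < lam) is a subset of A
  have hsub : ∀ α < lam, Af α ⊆ A := by
    intro α hα v hv
    rw [hunion]
    exact Set.mem_biUnion hα hv
  -- rank function
  have hrkset : ∀ v ∈ A, {α : Ordinal.{u} | α < lam ∧ v ∈ Af α}.Nonempty := by
    intro v hv
    rw [hunion] at hv
    obtain ⟨α, hα, hvα⟩ := Set.mem_iUnion₂.1 hv
    exact ⟨α, hα, hvα⟩
  set rk : V → Ordinal.{u} := fun v => sInf {α : Ordinal.{u} | α < lam ∧ v ∈ Af α} with hrk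
  have hrkmem : ∀ v ∈ A, rk v < lam ∧ v ∈ Af (rk v) := by
    intro v hv
    exact csInf_mem (hrkset v hv)
  -- the lexicographic well-order on A
  set r : A → A → Prop := fun v w =>
    Prod.Lex (· < · : Ordinal.{u} → Ordinal.{u} → Prop) WellOrderingRel (rk ↑v, (↑v : V)) (rk ↑w, ↑w) with hr
  let f : @RelEmbedding A (Ordinal.{u} × V) r
      (Prod.Lex (· < ·) WellOrderingRel) :=
    { toFun := fun v => (rk ↑v, ↑v)
      inj' := fun v w h => Subtype.ext (congrArg Prod.snd h)
      map_rel_iff' := Iff.rfl }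
  haveI hwo : IsWellOrder A r := f.isWellOrder
  -- r w v implies rk w ≤ rk v
  have hrle : ∀ v w : A, r w v → rk ↑w ≤ rk ↑v := by
    intro v w hwv
    rcases Prod.lex_iff.1 hwv with h | h
    · exact le_of_lt h
    · exact le_of_eq h.1
  have hAf_of_le : ∀ v w : A, rk ↑w ≤ rk ↑v → (↑w : V) ∈ Af (rk ↑v) := by
    intro v w hle
    exact hmono _ _ hle (hrkmem v v.2).1 (hrkmem w w.2).2
  -- the order type of r is κ.ord
  have htype : Ordinal.type r = κ.ord := by
    apply le_antisymm
    · by_contra hlt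
      push_neg at hlt
      obtain ⟨v, hv⟩ := Ordinal.typein_surj r hlt
      have hcard : #{w : A // r w v} ≤ #(Af (rk ↑v)) := by
        refine Cardinal.mk_le_of_injective (f := fun w =>
          (⟨↑↑w, hAf_of_le v ↑w (hrle v ↑w w.2)⟩ : Af (rk ↑v))) ?_
        intro x y hxy
        simp only [Subtype.mk.injEq] at hxy
        exact Subtype.ext (Subtype.ext hxy)
      have h1 : #{w : A // r w v} = κ := by
        have := Ordinal.card_typein (r := r) v
        rw [← this, hv, Cardinal.card_ord]
      rw [h1] at hcard
      exact absurd hcard (not_le.2 (hsize _ (hrkmem v v.2).1))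
    · rw [Cardinal.ord_le]
      rw [Ordinal.card_type, hA]
  -- the enumeration of A
  set aA : Ordinal.{u} → A := fun ξ =>
    if h : ξ < Ordinal.type r then Ordinal.enum r ⟨ξ, h⟩ else Classical.arbitrary A with haA
  set a : Ordinal.{u} → V := fun ξ => ↑(aA ξ) with ha
  have haval : ∀ ξ (h : ξ < κ.ord), aA ξ = Ordinal.enum r ⟨ξ, htype ▸ h⟩ := by
    intro ξ h
    rw [haA]
    simp only [htype ▸ h, dif_pos]
  -- initial segment property
  have hseg : ∀ ξ ζ : Ordinal.{u}, ξ ≤ ζ → ζ < κ.ord → a ξ ∈ Af (rk (a ζ)) := by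
    intro ξ ζ hle hζ
    rcases eq_or_lt_of_le hle with rfl | hlt
    · exact (hrkmem (a ξ) (aA ξ).2).2
    · have hξ : ξ < κ.ord := lt_trans hlt hζ
      have hrel : r (aA ξ) (aA ζ) := by
        rw [haval ξ hξ, haval ζ hζ]
        exact Ordinal.enum_lt_enum.2 (by exact Subtype.mk_lt_mk.2 hlt)
      exact hAf_of_le (aA ζ) (aA ξ) (hrle _ _ hrel)
  -- the b-sequence
  set S : Ordinal.{u} → Set V := fun ζ => commonNbhd G (Af (rk (a ζ))) with hS
  set b : Ordinal.{u} → V := pickFun S with hb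
  have hbspec : ∀ ζ < κ.ord, b ζ ∈ S ζ ∧ ∀ ξ, ξ < ζ → b ζ ≠ b ξ := by
    intro ζ hζ
    apply pickFun_spec
    have hScard : #(S ζ) = κ := hnb _ (hrkmem (a ζ) (aA ζ).2).1
    have hTcard : #(b '' Set.Iio ζ) < κ := by
      have h1 : Cardinal.lift.{u+1} #(b '' Set.Iio ζ) ≤ Cardinal.lift.{u} #(Set.Iio ζ) :=
        Cardinal.mk_image_le_lift
      rw [Ordinal.mk_Iio_ordinal, Cardinal.lift_lift] at h1
      have h2 : #(b '' Set.Iio ζ) ≤ ζ.card := by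
        exact_mod_cast Cardinal.lift_le.1 h1
      exact lt_of_le_of_lt h2 (Cardinal.lt_ord.1 hζ)
    have hne : (S ζ \ (b '' Set.Iio ζ)).Nonempty := by
      rw [Set.nonempty_iff_ne_empty]
      intro hemp
      have hsubset : S ζ ⊆ b '' Set.Iio ζ := Set.diff_eq_empty.1 hemp
      have := Cardinal.mk_le_mk_of_subset hsubset
      rw [hScard] at this
      exact absurd (lt_of_le_of_lt this hTcard) (lt_irrefl κ)
    obtain ⟨v, hvS, hvT⟩ := hne
    refine ⟨v, hvS, fun ξ hξ hvb => hvT ?_⟩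
    exact ⟨ξ, hξ, hvb.symm⟩
  -- assemble
  refine ⟨b '' Set.Iio κ.ord, a, b, ?_, ?_, ?_, rfl, ?_⟩
  · -- a injective on Iio κ.ord
    intro ξ hξ ζ hζ hab
    have : aA ξ = aA ζ := Subtype.ext hab
    rw [haval ξ hξ, haval ζ hζ] at this
    have := (Ordinal.enum r).injective this
    exact congrArg Subtype.val this
  · -- b injective on Iio κ.ord
    intro ξ hξ ζ hζ hab
    rcases lt_trichotomy ξ ζ with h | h | h
    · exact absurd hab.symm ((hbspec ζ hζ).2 ξ h)
    · exact h
    · exact absurd hab ((hbspec ξ hξ).2 ζ h)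
  · -- a '' Iio κ.ord = A
    apply Set.eq_of_subset_of_subset
    · rintro v ⟨ξ, hξ, rfl⟩
      exact (aA ξ).2
    · intro v hv
      have hlt : Ordinal.typein r ⟨v, hv⟩ < κ.ord := htype ▸ Ordinal.typein_lt_type r ⟨v, hv⟩
      refine ⟨Ordinal.typein r ⟨v, hv⟩, hlt, ?_⟩
      rw [ha]
      simp only
      rw [haval _ hlt]
      have : Ordinal.enum r ⟨Ordinal.typein r ⟨v, hv⟩, htype ▸ hlt⟩ = ⟨v, hv⟩ :=
        Ordinal.enum_typein r ⟨v, hv⟩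
      rw [this]
  · -- adjacency
    intro ξ ζ hle hζ
    exact (hbspec ζ hζ).1 (a ξ) (hseg ξ ζ hle hζ)
end
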